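/- In a homogeneous mining game (c_i = c for all i), the Nash equilibrium allocation x* = (n−1)/(n²c) is not evolutionary stable: there exists x' ≠ x* such that a miner deviating individually to x' obtains a strictly higher payoff than every non-deviating miner, i.e., Π_i(x', x*_{-i}) − Π_j(x', x*_{-i}) > 0 for all j ≠ i. -/

import Mathlib

open Finset

/-- Payoff of miner `i` in the symmetric mining game with common cost `c`. -/
noncomputable def payoff {n : ℕ} (c : ℝ) (x : Fin n → ℝ) (i : Fin n) : ℝ :=
  x i / (∑ j, x j) - c * x i

/-- in the homogeneous mining game the Nash equilibrium
`x* = (n−1)/(n²c)` is not evolutionary stable: any miner `i` has a deviation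
`x' ≠ x*` giving them a strictly higher payoff than every non-deviating miner. -/
theorem nash_not_evolutionary_stable (n : ℕ) (hn : 2 ≤ n) (c : ℝ) (hc : 0 < c)
    (xstar : ℝ) (hx : xstar = ((n : ℝ) - 1) / ((n : ℝ) ^ 2 * c)) (i : Fin n) :
    ∃ x' : ℝ, 0 ≤ x' ∧ x' ≠ xstar ∧
      ∀ j : Fin n, j ≠ i →
        0 < payoff c (Function.update (fun _ : Fin n => xstar) i x') i
            - payoff c (Function.update (fun _ : Fin n => xstar) i x') j := by
  subst hx
  have hN : (2:ℝ) ≤ (n:ℝ) := by exact_mod_cast hn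
  have hN0 : (0:ℝ) < (n:ℝ) := by linarith
  refine ⟨1/((n:ℝ)*c), by positivity, ?_, ?_⟩
  · have h : ((n:ℝ)-1)/((n:ℝ)^2*c) < 1/((n:ℝ)*c) := by
      rw [div_lt_div_iff₀ (by positivity) (by positivity)]
      nlinarith
    exact h.ne'
  · intro j hj
    have hcast : ((n - 1 : ℕ) : ℝ) = (n:ℝ) - 1 := by
      have h1 : 1 ≤ n := by omega
      push_cast [h1]; ring
    have hsum : ∑ k, Function.update (fun _ : Fin n => ((n:ℝ)-1)/((n:ℝ)^2*c)) i
        (1/((n:ℝ)*c)) k = ((n:ℝ)^2 - (n:ℝ) + 1)/((n:ℝ)^2*c) := by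
      rw [Finset.sum_update_of_mem (Finset.mem_univ i), Finset.sum_const,
        Finset.card_univ_diff, Finset.card_singleton, Fintype.card_fin, nsmul_eq_mul, hcast]
      field_simp
      ring
    simp only [payoff, Function.update_self, Function.update_of_ne hj, hsum]
    have hd : (0:ℝ) < (n:ℝ)^2 - (n:ℝ) + 1 := by nlinarith
    have key : (1/((n:ℝ)*c)) / (((n:ℝ)^2 - (n:ℝ) + 1)/((n:ℝ)^2*c))
        - c * (1/((n:ℝ)*c))
        - ((((n:ℝ)-1)/((n:ℝ)^2*c)) / (((n:ℝ)^2 - (n:ℝ) + 1)/((n:ℝ)^2*c))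
          - c * (((n:ℝ)-1)/((n:ℝ)^2*c)))
        = ((n:ℝ)-1) / ((n:ℝ)^2 * ((n:ℝ)^2 - (n:ℝ) + 1)) := by
      field_simp [hd.ne']
      have hD : (1 - (n:ℝ) + (n:ℝ)^2) ≠ 0 := (by nlinarith : (0:ℝ) < 1 - (n:ℝ) + (n:ℝ)^2).ne'
      linear_combination (mul_inv_cancel₀ hD)
    rw [key]
    apply div_pos (by linarith) (by positivity)
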